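/- Let A and B be finite alphabets and C ∈ (0,1). Consider substitution maps ρ: A → B^* and ρ': A → B^* such that for every a ∈ A the word ρ'(a) is a substring of ρ(a) (i.e. obtained from ρ(a) by deleting letters, keeping the order) and (1 − C)|ρ(a)| < |ρ'(a)|. Then for every Bernoulli measure p on A^ℤ, f̄(κ(A,ρ,p), κ(A,ρ',p)) < C. -/

import Mathlib

open MeasureTheory Filter Set
open scoped ENNReal NNReal Topology

noncomputable section

namespace LBPaper

/-! ### Words, edit distance, Feldman f̄-distances -/

/-- Length of a longest common substring (order-preserving subsequence) of two `n`-words. -/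
def lcs {α : Type*} (n : ℕ) (a b : Fin n → α) : ℕ :=
  sSup {k : ℕ | ∃ i : Fin k → Fin n, ∃ j : Fin k → Fin n,
    StrictMono i ∧ StrictMono j ∧ ∀ s, a (i s) = b (j s)}

/-- The edit (f̄) distance between two `n`-words: `1 - k/n` where `k` is the length of a
longest common substring. -/
def editDist {α : Type*} (n : ℕ) (a b : Fin n → α) : ℝ :=
  1 - (lcs n a b : ℝ) / (n : ℝ)

/-- The left shift on the two-sided sequence space. -/
def shift (α : Type*) : (ℤ → α) → (ℤ → α) := fun x n => x (n + 1)

/-- The left shift on the one-sided sequence space. -/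
def shiftP (α : Type*) : (ℕ → α) → (ℕ → α) := fun x n => x (n + 1)

/-- The word given by the coordinates `0,…,n-1` of a two-sided sequence. -/
def word {α : Type*} (n : ℕ) (x : ℤ → α) : Fin n → α := fun i => x ((i : ℕ) : ℤ)

/-- The word given by the coordinates `0,…,n-1` of a one-sided sequence. -/
def wordP {α : Type*} (n : ℕ) (x : ℕ → α) : Fin n → α := fun i => x (i : ℕ)

variable {α : Type*} [MeasurableSpace α]

/-- `f̄_n` between two measures on the two-sided shift space: the infimum over all `n`-joinings
of the integral of the edit distance. -/
def fbarN (n : ℕ) (ν ν' : Measure (ℤ → α)) : ℝ :=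
  sInf {r : ℝ | ∃ m : Measure ((Fin n → α) × (Fin n → α)),
    IsProbabilityMeasure m ∧
    m.map Prod.fst = ν.map (word n) ∧
    m.map Prod.snd = ν'.map (word n) ∧
    r = ∫ q, editDist n q.1 q.2 ∂m}

/-- The `f̄`-distance between two measures on the two-sided shift space. -/
def fbar (ν ν' : Measure (ℤ → α)) : ℝ :=
  sInf {ε : ℝ | 0 < ε ∧ ∃ᶠ n in atTop, fbarN n ν ν' ≤ ε}

/-- `f̄_n` between two measures on the one-sided shift space. -/
def fbarNP (n : ℕ) (ν ν' : Measure (ℕ → α)) : ℝ :=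
  sInf {r : ℝ | ∃ m : Measure ((Fin n → α) × (Fin n → α)),
    IsProbabilityMeasure m ∧
    m.map Prod.fst = ν.map (wordP n) ∧
    m.map Prod.snd = ν'.map (wordP n) ∧
    r = ∫ q, editDist n q.1 q.2 ∂m}

/-- The `f̄`-distance between two measures on the one-sided shift space. -/
def fbarP (ν ν' : Measure (ℕ → α)) : ℝ :=
  sInf {ε : ℝ | 0 < ε ∧ ∃ᶠ n in atTop, fbarNP n ν ν' ≤ ε}

/-! ### Kolmogorov–Sinai entropy -/

/-- Shannon entropy of a finite family of sets with respect to a measure. -/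
def partEnt {X : Type*} [MeasurableSpace X] {ι : Type*} [Fintype ι]
    (μ : Measure X) (P : ι → Set X) : ℝ :=
  ∑ i, Real.negMulLog ((μ (P i)).toReal)

/-- The atom of the refinement `⋁_{j<n} T^{-j} P` indexed by the word `s`. -/
def refinedAtom {X ι : Type*} (T : X → X) (P : ι → Set X) (n : ℕ) (s : Fin n → ι) : Set X :=
  ⋂ j : Fin n, (T^[(j : ℕ)]) ⁻¹' P (s j)

/-- `P` is a finite measurable partition of `X`. -/
def IsFinPartition {X : Type*} [MeasurableSpace X] {ι : Type*} (P : ι → Set X) : Prop :=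
  (∀ i, MeasurableSet (P i)) ∧ (Pairwise fun i j => Disjoint (P i) (P j)) ∧
    (⋃ i, P i) = Set.univ

/-- The entropy of `T` with respect to a finite partition `P`
(the limit `lim (1/n) H(⋁_{j<n} T^{-j}P)` equals this infimum). -/
def entPart {X : Type*} [MeasurableSpace X] {ι : Type*} [Fintype ι]
    (T : X → X) (μ : Measure X) (P : ι → Set X) : ℝ :=
  ⨅ n : ℕ, (((n : ℝ) + 1)⁻¹) * partEnt μ (fun s : Fin (n + 1) → ι => refinedAtom T P (n + 1) s)

/-- The Kolmogorov–Sinai (measure-theoretic) entropy of `(T, μ)`: the supremum of the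
entropies with respect to all finite measurable partitions. -/
def ksEntropy {X : Type*} [MeasurableSpace X] (T : X → X) (μ : Measure X) : ℝ :=
  ⨆ (k : ℕ), ⨆ (P : Fin k → Set X), ⨆ (_ : IsFinPartition P), entPart T μ P

/-! ### Loosely Bernoulli -/

/-- `(X, S, μ)` is loosely Bernoulli: every finite measurable partition `P` is LB, i.e. for
every `ε > 0` there are `n` and a collection `G` of atoms of `⋁_{j<n} S^{-j}P` of total
measure `> 1 - ε` that are pairwise `ε`-close in the edit distance (atoms identified with
`n`-words over the index alphabet of `P`). -/
def IsLB {X : Type*} [MeasurableSpace X] (S : X → X) (μ : Measure X) : Prop :=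
  ∀ (k : ℕ) (P : Fin k → Set X), IsFinPartition P →
    ∀ ε : ℝ, 0 < ε → ∃ n : ℕ, 0 < n ∧ ∃ G : Finset (Fin n → Fin k),
      (1 - ε : ℝ) < (μ (⋃ s ∈ G, refinedAtom S P n s)).toReal ∧
      ∀ s ∈ G, ∀ t ∈ G, editDist n s t < ε

/-! ### Bernoulli measures -/

/-- `p` is a probability vector on the finite alphabet `α`. -/
def IsProbVector {α : Type*} [Fintype α] (p : α → ℝ) : Prop :=
  (∀ a, 0 ≤ p a) ∧ ∑ a, p a = 1

/-- `ν` is the Bernoulli (i.i.d. product) measure on `α^ℤ` with marginal probability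
vector `p`. -/
def IsBernoulli {α : Type*} [MeasurableSpace α] (p : α → ℝ) (ν : Measure (ℤ → α)) : Prop :=
  IsProbabilityMeasure ν ∧
    ∀ (s : Finset ℤ) (f : ℤ → α),
      (ν {x : ℤ → α | ∀ i ∈ s, x i = f i}).toReal = ∏ i ∈ s, p (f i)

end LBPaper

namespace LBPaper

/-! ### Substitution maps and Bernoulli-coded measures -/

variable {α β : Type*}

/-- Cumulative lengths of the words substituted for the letters of `x`:
`cumLen ρ x n` is the position in the image sequence at which the word `ρ (x n)` starts. -/
def cumLen (ρ : α → List β) (x : ℤ → α) : ℤ → ℤ := fun n =>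
  if 0 ≤ n then ((∑ i ∈ Finset.range n.toNat, ((ρ (x (i : ℕ))).length : ℤ)) : ℤ)
  else -((∑ i ∈ Finset.range (-n).toNat, ((ρ (x (-((i : ℕ) + 1)))).length : ℤ)) : ℤ)

/-- The index of the block of the substituted sequence containing position `j`. -/
def blockIdx (ρ : α → List β) (x : ℤ → α) (j : ℤ) : ℤ :=
  sSup {n : ℤ | cumLen ρ x n ≤ j}

/-- The extension `ρ̲ : α^ℤ → β^ℤ` of a substitution map by concatenation, with the word
`ρ (x 0)` starting at coordinate `0`. -/
def subst [Nonempty β] (ρ : α → List β) (x : ℤ → α) : ℤ → β := fun j =>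
  (ρ (x (blockIdx ρ x j))).getD (j - cumLen ρ x (blockIdx ρ x j)).toNat
    (Classical.arbitrary β)

/-- The cylinder `[a] = {x : a_0 = a}`. -/
def cyl0 (a : α) : Set (ℤ → α) := {x : ℤ → α | x 0 = a}

/-- The Bernoulli-coded measure `κ(α, ρ, ν) = ρ̲_* ν` on `β^ℤ`. -/
def kappa [Nonempty β] [MeasurableSpace α] [MeasurableSpace β]
    (ρ : α → List β) (ν : Measure (ℤ → α)) : Measure (ℤ → β) :=
  ν.map (subst ρ)

/-- The shift-invariant version `κ_inv(α, ρ, ν)` of the Bernoulli-coded measure. -/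
def kappaInv [Fintype α] [Nonempty β] [MeasurableSpace α] [MeasurableSpace β]
    (ρ : α → List β) (ν : Measure (ℤ → α)) : Measure (ℤ → β) :=
  ∑ a : α, (((ρ a).length : ℝ≥0∞))⁻¹ •
    ∑ j ∈ Finset.range (ρ a).length,
      Measure.map (fun x => (shift β)^[j] (subst ρ x)) (ν.restrict (cyl0 a))

/-- The Feldman `f̄`-pseudometric between two-sided sequences. -/
def fbarSeq (x y : ℤ → α) : ℝ :=
  Filter.limsup (fun n : ℕ =>
    editDist (2 * n) (fun i : Fin (2 * n) => x ((i : ℕ) - (n : ℤ)))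
      (fun i : Fin (2 * n) => y ((i : ℕ) - (n : ℤ)))) Filter.atTop

/-- Maximal word length of a substitution. -/
def maxLen [Fintype α] [Nonempty α] (ρ : α → List β) : ℕ :=
  Finset.univ.sup' Finset.univ_nonempty fun a => (ρ a).length

/-- Minimal word length of a substitution. -/
def minLen [Fintype α] [Nonempty α] (ρ : α → List β) : ℕ :=
  Finset.univ.inf' Finset.univ_nonempty fun a => (ρ a).length

end LBPaper

namespace LBPaper

section Aux

variable {α β : Type*}

/-! #### Basic properties of `cumLen` -/

lemma cumLen_zero (ρ : α → List β) (x : ℤ → α) : cumLen ρ x 0 = 0 := by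
  simp [cumLen]

lemma cumLen_nonpos (ρ : α → List β) (x : ℤ → α) {n : ℤ} (hn : n ≤ 0) :
    cumLen ρ x n
      = -((∑ i ∈ Finset.range (-n).toNat, ((ρ (x (-((i : ℕ) + 1)))).length : ℤ)) : ℤ) := by
  rcases eq_or_lt_of_le hn with h | h
  · subst h; simp [cumLen]
  · rw [cumLen, if_neg (by omega)]

lemma cumLen_succ (ρ : α → List β) (x : ℤ → α) (k : ℤ) :
    cumLen ρ x (k + 1) = cumLen ρ x k + ((ρ (x k)).length : ℤ) := by
  rcases le_or_gt 0 k with hk | hk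
  · have h1 : (0:ℤ) ≤ k + 1 := by omega
    have h2 : (k+1).toNat = k.toNat + 1 := by omega
    rw [cumLen, if_pos h1, cumLen, if_pos hk, h2, Finset.sum_range_succ]
    have h3 : ((k.toNat : ℕ) : ℤ) = k := by omega
    rw [h3]
  · have h1 : k + 1 ≤ 0 := by omega
    rw [cumLen_nonpos ρ x h1, cumLen_nonpos ρ x hk.le]
    have h2 : (-k).toNat = (-(k+1)).toNat + 1 := by omega
    rw [h2, Finset.sum_range_succ]
    have h3 : -((((-(k+1)).toNat : ℕ) : ℤ) + 1) = k := by omega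
    rw [h3]
    ring

lemma cumLen_strictMono (ρ : α → List β) (x : ℤ → α) (hρ : ∀ a, ρ a ≠ []) :
    StrictMono (cumLen ρ x) := by
  apply strictMono_int_of_lt_succ
  intro n
  have h := List.length_pos_iff.mpr (hρ (x n))
  rw [cumLen_succ]
  omega

lemma le_cumLen (ρ : α → List β) (x : ℤ → α) (hρ : ∀ a, ρ a ≠ []) {z : ℤ} (hz : 0 ≤ z) :
    z ≤ cumLen ρ x z := by
  obtain ⟨m, rfl⟩ : ∃ m : ℕ, z = (m : ℤ) := ⟨z.toNat, by omega⟩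
  induction m with
  | zero => simp [cumLen_zero]
  | succ n ih =>
    have h1 : ((n+1 : ℕ) : ℤ) = (n : ℤ) + 1 := by push_cast; ring
    have h2 := List.length_pos_iff.mpr (hρ (x n))
    have h3 := ih (by positivity)
    rw [h1, cumLen_succ]
    omega

lemma cumLen_le (ρ : α → List β) (x : ℤ → α) (hρ : ∀ a, ρ a ≠ []) {z : ℤ} (hz : z ≤ 0) :
    cumLen ρ x z ≤ z := by
  obtain ⟨m, rfl⟩ : ∃ m : ℕ, z = -(m : ℤ) := ⟨(-z).toNat, by omega⟩
  induction m with
  | zero => simp [cumLen_zero]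
  | succ n ih =>
    have h1 : -(n : ℤ) = -((n+1 : ℕ) : ℤ) + 1 := by push_cast; ring
    have h2 := List.length_pos_iff.mpr (hρ (x (-((n+1 : ℕ) : ℤ))))
    have h3 : cumLen ρ x (-(n:ℤ)) ≤ -(n:ℤ) := ih (by omega)
    rw [h1, cumLen_succ] at h3
    omega

lemma exists_blockIdx (ρ : α → List β) (x : ℤ → α) (hρ : ∀ a, ρ a ≠ []) (j : ℤ) :
    ∃ k : ℤ, cumLen ρ x k ≤ j ∧ j < cumLen ρ x (k + 1) := by
  have hbdd : ∃ b : ℤ, ∀ z : ℤ, cumLen ρ x z ≤ j → z ≤ b := by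
    refine ⟨max j 0, fun z hz => ?_⟩
    rcases le_or_gt z 0 with h | h
    · omega
    · have := le_cumLen ρ x hρ h.le
      omega
  have hinh : ∃ z : ℤ, cumLen ρ x z ≤ j := by
    refine ⟨min j 0, ?_⟩
    have := cumLen_le ρ x hρ (z := min j 0) (by omega)
    omega
  obtain ⟨k, hk, hmax⟩ := Int.exists_greatest_of_bdd
      (P := fun n => cumLen ρ x n ≤ j) hbdd hinh
  refine ⟨k, hk, ?_⟩
  by_contra h
  have := hmax (k+1) (by omega)
  omega

lemma blockIdx_eq (ρ : α → List β) (x : ℤ → α) (hρ : ∀ a, ρ a ≠ []) {j k : ℤ}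
    (h1 : cumLen ρ x k ≤ j) (h2 : j < cumLen ρ x (k+1)) :
    blockIdx ρ x j = k := by
  apply IsGreatest.csSup_eq
  refine ⟨h1, fun m hm => ?_⟩
  by_contra h
  have hm' : k + 1 ≤ m := by omega
  have := (cumLen_strictMono ρ x hρ).monotone hm'
  simp only [Set.mem_setOf_eq] at hm
  omega

lemma subst_apply [Nonempty β] (ρ : α → List β) (x : ℤ → α) (hρ : ∀ a, ρ a ≠ [])
    (k : ℤ) (r : ℕ) (hr : r < (ρ (x k)).length) :
    subst ρ x (cumLen ρ x k + r) = (ρ (x k)).get ⟨r, hr⟩ := by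
  have hb : blockIdx ρ x (cumLen ρ x k + r) = k := by
    apply blockIdx_eq ρ x hρ (by omega)
    rw [cumLen_succ]
    omega
  rw [subst, hb]
  have h1 : (cumLen ρ x k + (r:ℤ) - cumLen ρ x k).toNat = r := by omega
  rw [h1, List.getD_eq_getElem _ _ hr]
  exact (List.get_eq_getElem (l := ρ (x k)) (i := ⟨r, hr⟩)).symm

lemma cumLen_real_ge (ρ ρ' : α → List β) (x : ℤ → α) (q : ℝ)
    (hq : ∀ a, q * ((ρ a).length : ℝ) ≤ ((ρ' a).length : ℝ)) {z : ℤ} (hz : 0 ≤ z) :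
    q * ((cumLen ρ x z : ℤ) : ℝ) ≤ ((cumLen ρ' x z : ℤ) : ℝ) := by
  obtain ⟨m, rfl⟩ : ∃ m : ℕ, z = (m : ℤ) := ⟨z.toNat, by omega⟩
  induction m with
  | zero => simp [cumLen_zero]
  | succ l ih =>
    have h1 : ((l+1 : ℕ) : ℤ) = (l : ℤ) + 1 := by push_cast; ring
    have h2 := ih (by positivity)
    have h3 := hq (x l)
    rw [h1, cumLen_succ, cumLen_succ]
    push_cast
    push_cast at h2
    rw [mul_add]
    linarith

/-! #### Measurability -/

variable [MeasurableSpace α] [MeasurableSingletonClass α] [Countable α]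

lemma measurable_sum_int {X : Type*} [MeasurableSpace X] (s : Finset ℕ) (f : ℕ → X → ℤ)
    (hf : ∀ i, Measurable (f i)) : Measurable fun x => ∑ i ∈ s, f i x := by
  classical
  induction s using Finset.induction with
  | empty => simpa using measurable_const
  | insert _ _ h ih =>
    simp_rw [Finset.sum_insert h]
    exact (measurable_of_countable (fun p : ℤ × ℤ => p.1 + p.2)).comp ((hf _).prodMk ih)

lemma measurable_cumLen (ρ : α → List β) (n : ℤ) :
    Measurable fun x : ℤ → α => cumLen ρ x n := by
  have key : ∀ (s : Finset ℕ) (g : ℕ → ℤ),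
      Measurable fun x : ℤ → α => ∑ i ∈ s, ((ρ (x (g i))).length : ℤ) := by
    intro s g
    apply measurable_sum_int
    intro i
    exact (measurable_of_countable (fun a : α => ((ρ a).length : ℤ))).comp
      (measurable_pi_apply (g i))
  by_cases h : 0 ≤ n
  · simp only [cumLen, if_pos h]
    exact key _ _
  · simp only [cumLen, if_neg h]
    exact (measurable_of_countable (fun z : ℤ => -z)).comp (key _ _)

lemma measurable_blockIdx (ρ : α → List β) (hρ : ∀ a, ρ a ≠ []) (j : ℤ) :
    Measurable fun x : ℤ → α => blockIdx ρ x j := by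
  apply measurable_to_countable'
  intro k
  have hset : (fun x : ℤ → α => blockIdx ρ x j) ⁻¹' {k} =
      {x | cumLen ρ x k ≤ j} ∩ {x | j < cumLen ρ x (k+1)} := by
    ext x
    simp only [Set.mem_preimage, Set.mem_singleton_iff, Set.mem_inter_iff, Set.mem_setOf_eq]
    constructor
    · intro h
      obtain ⟨k', h1, h2⟩ := exists_blockIdx ρ x hρ j
      have := blockIdx_eq ρ x hρ h1 h2
      rw [this] at h
      subst h
      exact ⟨h1, h2⟩
    · rintro ⟨h1, h2⟩
      exact blockIdx_eq ρ x hρ h1 h2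
  rw [hset]
  exact ((measurable_cumLen ρ k)
      (show MeasurableSet {z : ℤ | z ≤ j} from (Set.to_countable _).measurableSet)).inter
    ((measurable_cumLen ρ (k+1))
      (show MeasurableSet {z : ℤ | j < z} from (Set.to_countable _).measurableSet))

lemma measurable_subst [Nonempty β] [MeasurableSpace β] (ρ : α → List β) (hρ : ∀ a, ρ a ≠ []) :
    Measurable (subst ρ : (ℤ → α) → ℤ → β) := by
  apply measurable_pi_lambda
  intro j
  have hG : Measurable (fun p : (ℤ → α) × ℤ =>
      (ρ (p.1 p.2)).getD (j - cumLen ρ p.1 p.2).toNat (Classical.arbitrary β)) := by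
    apply measurable_from_prod_countable_left
    intro k
    exact (measurable_of_countable
        (fun q : α × ℤ => (ρ q.1).getD (j - q.2).toNat (Classical.arbitrary β))).comp
      ((measurable_pi_apply k).prodMk (measurable_cumLen ρ k))
  have h2 : Measurable fun x : ℤ → α => (x, blockIdx ρ x j) :=
    measurable_id.prodMk (measurable_blockIdx ρ hρ j)
  exact hG.comp h2

lemma measurable_word {γ : Type*} [MeasurableSpace γ] (n : ℕ) :
    Measurable (word n : (ℤ → γ) → Fin n → γ) :=
  measurable_pi_lambda _ fun i => measurable_pi_apply _

/-! #### Basic properties of `lcs` -/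

lemma lcs_mem_bddAbove {γ : Type*} (n : ℕ) (a b : Fin n → γ) :
    BddAbove {k : ℕ | ∃ i : Fin k → Fin n, ∃ j : Fin k → Fin n,
      StrictMono i ∧ StrictMono j ∧ ∀ s, a (i s) = b (j s)} := by
  refine ⟨n, ?_⟩
  rintro k ⟨i, j, hi, hj, _⟩
  simpa using Fintype.card_le_of_injective i hi.injective

lemma lcs_le {γ : Type*} (n : ℕ) (a b : Fin n → γ) : lcs n a b ≤ n := by
  apply csSup_le
  · exact ⟨0, Fin.elim0, Fin.elim0, fun s => s.elim0, fun s => s.elim0, fun s => s.elim0⟩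
  · rintro k ⟨i, j, hi, hj, _⟩
    simpa using Fintype.card_le_of_injective i hi.injective

lemma editDist_nonneg {γ : Type*} (n : ℕ) (a b : Fin n → γ) : 0 ≤ editDist n a b := by
  rcases Nat.eq_zero_or_pos n with h | h
  · subst h; simp [editDist]
  · have h1 := lcs_le n a b
    have h2 : (lcs n a b : ℝ) / n ≤ 1 := by
      rw [div_le_one (by positivity)]
      exact_mod_cast h1
    simp only [editDist]
    linarith

end Aux

/-! #### The main combinatorial estimate -/

lemma lcs_subst_ge {α β : Type*} [Nonempty β] (ρ ρ' : α → List β)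
    (hρ : ∀ a, ρ a ≠ []) (hρ' : ∀ a, ρ' a ≠ []) (hsub : ∀ a, (ρ' a).Sublist (ρ a))
    (x : ℤ → α) (n : ℕ) (J : ℤ) (hJ0 : 0 ≤ J) (hJn : cumLen ρ x J ≤ (n : ℤ)) :
    cumLen ρ' x J ≤ (lcs n (word n (subst ρ x)) (word n (subst ρ' x)) : ℤ) := by
  classical
  -- the per-letter embeddings coming from the sublist hypothesis
  have hN : ∀ a : α, ∃ N : ℕ → ℕ,
      (∀ r, r < (ρ' a).length → N r < (ρ a).length) ∧
      (∀ r1 r2, r2 < (ρ' a).length → r1 < r2 → N r1 < N r2) ∧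
      (∀ r (h : r < (ρ' a).length) (h' : N r < (ρ a).length),
          (ρ' a).get ⟨r, h⟩ = (ρ a).get ⟨N r, h'⟩) := by
    intro a
    obtain ⟨f, hf⟩ := List.sublist_iff_exists_fin_orderEmbedding_get_eq.mp (hsub a)
    refine ⟨fun r => if h : r < (ρ' a).length then (f ⟨r, h⟩ : ℕ) else 0, ?_, ?_, ?_⟩
    · intro r h
      simp only [dif_pos h]
      exact (f ⟨r, h⟩).is_lt
    · intro r1 r2 h2 h12
      simp only [dif_pos (h12.trans h2), dif_pos h2]
      exact f.strictMono (Fin.mk_lt_mk.mpr h12)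
    · intro r h h'
      rw [hf ⟨r, h⟩]
      congr 1
      apply Fin.ext
      simp [dif_pos h]
  choose N hNlt hNmono hNget using hN
  -- basic inequalities
  have hmono := (cumLen_strictMono ρ x hρ).monotone
  have hmono' := (cumLen_strictMono ρ' x hρ').monotone
  have hlenle : ∀ a : α, (ρ' a).length ≤ (ρ a).length := fun a => (hsub a).length_le
  have hcum_le : ∀ k : ℤ, 0 ≤ k → cumLen ρ' x k ≤ cumLen ρ x k := by
    intro k hk
    obtain ⟨m, rfl⟩ : ∃ m : ℕ, k = (m : ℤ) := ⟨k.toNat, by omega⟩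
    induction m with
    | zero => simp [cumLen_zero]
    | succ l ih =>
      have h1 : ((l+1 : ℕ) : ℤ) = (l : ℤ) + 1 := by push_cast; ring
      have h2 := ih (by positivity)
      have h3 := hlenle (x l)
      rw [h1, cumLen_succ, cumLen_succ]
      omega
  have hK0 : 0 ≤ cumLen ρ' x J := le_trans hJ0 (le_cumLen ρ' x hρ' hJ0)
  set K : ℕ := (cumLen ρ' x J).toNat with hKdef
  have hKn : (K : ℤ) ≤ (n : ℤ) := by
    have := hcum_le J hJ0
    omega
  -- the block data for each position s < K
  have hex : ∀ s : Fin K, ∃ k : ℤ, 0 ≤ k ∧ k + 1 ≤ J ∧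
      cumLen ρ' x k ≤ (s : ℤ) ∧ (s : ℤ) < cumLen ρ' x (k+1) := by
    intro s
    obtain ⟨k, h1, h2⟩ := exists_blockIdx ρ' x hρ' (s : ℤ)
    have hs0 : (0:ℤ) ≤ (s : ℤ) := by positivity
    have hsK : ((s : ℕ) : ℤ) < cumLen ρ' x J := by
      have := s.is_lt
      omega
    refine ⟨k, ?_, ?_, h1, h2⟩
    · by_contra h
      push_neg at h
      have h3 : cumLen ρ' x (k+1) ≤ k+1 := cumLen_le ρ' x hρ' (by omega)
      omega
    · by_contra h
      push_neg at h
      have := hmono' (show J ≤ k by omega)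
      omega
  choose k hk0 hkJ hk1 hk2 using hex
  -- position within the block
  have hr : ∀ s : Fin K, ((s : ℤ) - cumLen ρ' x (k s)).toNat < (ρ' (x (k s))).length := by
    intro s
    have h := hk2 s
    rw [cumLen_succ] at h
    have h1 := hk1 s
    omega
  set r : Fin K → ℕ := fun s => ((s : ℤ) - cumLen ρ' x (k s)).toNat with hrdef
  have hrZ : ∀ s : Fin K, (r s : ℤ) = (s : ℤ) - cumLen ρ' x (k s) := by
    intro s
    have := hk1 s
    simp only [r]
    omega
  -- the index map into the ρ-word
  have hE : ∀ s : Fin K, 0 ≤ cumLen ρ x (k s) + (N (x (k s)) (r s) : ℤ) ∧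
      cumLen ρ x (k s) + (N (x (k s)) (r s) : ℤ) < (n : ℤ) := by
    intro s
    have h0 : 0 ≤ cumLen ρ x (k s) := le_trans (hk0 s) (le_cumLen ρ x hρ (hk0 s))
    have h1 : N (x (k s)) (r s) < (ρ (x (k s))).length := hNlt _ _ (hr s)
    have h2 : cumLen ρ x (k s) + ((ρ (x (k s))).length : ℤ) = cumLen ρ x (k s + 1) :=
      (cumLen_succ ρ x (k s)).symm
    have h3 : cumLen ρ x (k s + 1) ≤ cumLen ρ x J := hmono (hkJ s)
    constructor
    · positivity
    · omega
  have hKmem : K ∈ {m : ℕ | ∃ i : Fin m → Fin n, ∃ j : Fin m → Fin n,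
      StrictMono i ∧ StrictMono j ∧
      ∀ s, (word n (subst ρ x)) (i s) = (word n (subst ρ' x)) (j s)} := by
    refine ⟨fun s => ⟨(cumLen ρ x (k s) + (N (x (k s)) (r s) : ℤ)).toNat,
        by have := hE s; omega⟩,
      fun s => ⟨(s : ℕ), by have := s.is_lt; omega⟩, ?_, ?_, ?_⟩
    · -- StrictMono i
      intro s t hst
      have hstn : (s : ℤ) < (t : ℤ) := by exact_mod_cast hst
      rw [Fin.mk_lt_mk]
      have hkk : k s ≤ k t := by
        by_contra h
        push_neg at h
        have h1 := hmono' (show k t + 1 ≤ k s by omega)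
        have := hk1 s; have := hk2 t
        omega
      have goalZ : cumLen ρ x (k s) + (N (x (k s)) (r s) : ℤ)
          < cumLen ρ x (k t) + (N (x (k t)) (r t) : ℤ) := by
        rcases eq_or_lt_of_le hkk with heq | hlt
        · have hrr : r s < r t := by
            have h1 := hrZ s; have h2 := hrZ t
            rw [heq] at h1
            omega
          have h3 : r t < (ρ' (x (k t))).length := hr t
          have h4 := hNmono (x (k t)) (r s) (r t) h3 hrr
          rw [heq]
          omega
        · have h1 : N (x (k s)) (r s) < (ρ (x (k s))).length := hNlt _ _ (hr s)
          have h2 : cumLen ρ x (k s + 1) ≤ cumLen ρ x (k t) := hmono (by omega)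
          rw [cumLen_succ] at h2
          have h5 : (0:ℤ) ≤ (N (x (k t)) (r t) : ℤ) := by positivity
          omega
      have h6 := hE s
      have h7 := hE t
      omega
    · -- StrictMono j
      intro s t hst
      rw [Fin.mk_lt_mk]
      exact_mod_cast hst
    · -- the values agree
      intro s
      have h1 : N (x (k s)) (r s) < (ρ (x (k s))).length := hNlt _ _ (hr s)
      have hE1 := hE s
      simp only [word]
      have hcast : (((cumLen ρ x (k s) + (N (x (k s)) (r s) : ℤ)).toNat : ℕ) : ℤ)
          = cumLen ρ x (k s) + (N (x (k s)) (r s) : ℤ) := by omega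
      rw [hcast, subst_apply ρ x hρ (k s) _ h1]
      have hcast2 : ((s : ℕ) : ℤ) = cumLen ρ' x (k s) + ((r s : ℕ) : ℤ) := by
        have := hrZ s; omega
      rw [hcast2, subst_apply ρ' x hρ' (k s) _ (hr s)]
      exact (hNget (x (k s)) (r s) (hr s) h1).symm
  have hle : K ≤ lcs n (word n (subst ρ x)) (word n (subst ρ' x)) :=
    le_csSup (lcs_mem_bddAbove n _ _) hKmem
  omega

/-- If `ρ'` is obtained from `ρ` by deleting, for each letter, less than a
proportion `C` of the letters of the substituted word (keeping the order), then the
corresponding Bernoulli-coded measures are `f̄`-closer than `C`. -/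
theorem fbar_kappa_sublist_lt
    {α β : Type*} [Fintype α] [MeasurableSpace α] [MeasurableSingletonClass α]
    [Fintype β] [Nonempty β] [MeasurableSpace β] [MeasurableSingletonClass β]
    (C : ℝ) (hC0 : 0 < C) (hC1 : C < 1)
    (ρ ρ' : α → List β) (hρ : ∀ a, ρ a ≠ []) (hρ' : ∀ a, ρ' a ≠ [])
    (hsub : ∀ a, (ρ' a).Sublist (ρ a))
    (hlen : ∀ a, (1 - C) * ((ρ a).length : ℝ) < ((ρ' a).length : ℝ))
    (p : α → ℝ) (ν : Measure (ℤ → α)) (hb : IsBernoulli p ν) :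
    fbar (kappa ρ ν) (kappa ρ' ν) < C := by
  haveI hbp : IsProbabilityMeasure ν := hb.1
  haveI hA : Nonempty α := by
    by_contra h
    rw [not_nonempty_iff] at h
    have huniv : (Set.univ : Set (ℤ → α)) = ∅ := by
      ext x
      exact absurd trivial (fun _ => h.false (x 0))
    have h1 := hbp.measure_univ
    rw [huniv] at h1
    simp at h1
  set q : ℝ := Finset.univ.inf' Finset.univ_nonempty
      (fun a : α => ((ρ' a).length : ℝ) / ((ρ a).length : ℝ)) with hq
  have hlenpos : ∀ a : α, (0:ℝ) < ((ρ a).length : ℝ) := fun a => by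
    exact_mod_cast List.length_pos_iff.mpr (hρ a)
  have hq_gt : 1 - C < q := by
    rw [hq, Finset.lt_inf'_iff]
    intro a _
    rw [lt_div_iff₀ (hlenpos a)]
    exact hlen a
  have hq_le_one : q ≤ 1 := by
    obtain ⟨a⟩ := hA
    refine le_trans (Finset.inf'_le _ (Finset.mem_univ a)) ?_
    rw [div_le_one (hlenpos a)]
    exact_mod_cast (hsub a).length_le
  have hq_pos : 0 < q := by linarith
  have hq_mul : ∀ a : α, q * ((ρ a).length : ℝ) ≤ ((ρ' a).length : ℝ) := by
    intro a
    have h1 : q ≤ ((ρ' a).length : ℝ) / ((ρ a).length : ℝ) :=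
      Finset.inf'_le _ (Finset.mem_univ a)
    rw [le_div_iff₀ (hlenpos a)] at h1
    exact h1
  set ε : ℝ := (1 - q + C) / 2 with hε
  have hε_pos : 0 < ε := by rw [hε]; linarith
  have hε_lt : ε < C := by rw [hε]; linarith
  set d : ℝ := (C - (1 - q)) / 2 with hd
  have hd_pos : 0 < d := by rw [hd]; linarith
  set L : ℕ := maxLen ρ with hL
  obtain ⟨N₀, hN₀⟩ := exists_nat_gt ((L : ℝ) / d)
  -- pointwise bound on the edit distance of substituted words
  have hpoint : ∀ n : ℕ, N₀ ≤ n → 1 ≤ n → ∀ x : ℤ → α,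
      editDist n (word n (subst ρ x)) (word n (subst ρ' x)) ≤ ε := by
    intro n hn hn1 x
    have hnpos : (0:ℝ) < (n:ℝ) := by exact_mod_cast hn1
    obtain ⟨J, hJ1, hJ2⟩ := exists_blockIdx ρ x hρ (n : ℤ)
    have hJ0 : 0 ≤ J := by
      by_contra h
      push_neg at h
      have := cumLen_le ρ x hρ (show J + 1 ≤ 0 by omega)
      omega
    have hlcs := lcs_subst_ge ρ ρ' hρ hρ' hsub x n J hJ0 hJ1
    have hLb : (ρ (x J)).length ≤ L :=
      Finset.le_sup' (fun a : α => (ρ a).length) (Finset.mem_univ (x J))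
    have h2 : (n:ℤ) - (L:ℤ) < cumLen ρ x J := by
      rw [cumLen_succ] at hJ2
      omega
    have h3 : q * ((cumLen ρ x J : ℤ) : ℝ) ≤ ((cumLen ρ' x J : ℤ) : ℝ) :=
      cumLen_real_ge ρ ρ' x q hq_mul hJ0
    have h2' : (n:ℝ) - (L:ℝ) ≤ ((cumLen ρ x J : ℤ) : ℝ) := by
      have h := h2.le
      have h' : (((n:ℤ) - (L:ℤ) : ℤ) : ℝ) ≤ ((cumLen ρ x J : ℤ) : ℝ) := by exact_mod_cast h
      push_cast at h'
      linarith
    have h4 : q * ((n:ℝ) - (L:ℝ)) ≤ ((cumLen ρ' x J : ℤ) : ℝ) :=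
      le_trans (mul_le_mul_of_nonneg_left h2' hq_pos.le) h3
    set W : ℝ := (lcs n (word n (subst ρ x)) (word n (subst ρ' x)) : ℝ) with hW
    have hlcsR : q * ((n:ℝ) - (L:ℝ)) ≤ W := by
      have hZ : ((cumLen ρ' x J : ℤ) : ℝ) ≤ W := by
        rw [hW]
        exact_mod_cast hlcs
      linarith
    have hLn : (L:ℝ) < d * (n:ℝ) := by
      have hNn : (N₀ : ℝ) ≤ (n:ℝ) := by exact_mod_cast hn
      rw [div_lt_iff₀ hd_pos] at hN₀
      nlinarith
    have h7 : q * (L:ℝ) ≤ (L:ℝ) :=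
      mul_le_of_le_one_left (by positivity) hq_le_one
    show 1 - W / n ≤ ε
    rw [sub_le_iff_le_add, ← sub_le_iff_le_add']
    rw [le_div_iff₀ hnpos]
    rw [hε]
    rw [hd] at hLn
    nlinarith [hlcsR, hLn, h7]
  -- bound on fbarN for large n
  have hbarN : ∀ n : ℕ, N₀ ≤ n → 1 ≤ n → fbarN n (kappa ρ ν) (kappa ρ' ν) ≤ ε := by
    intro n hn hn1
    have hsρ : Measurable (subst ρ : (ℤ → α) → ℤ → β) := measurable_subst ρ hρ
    have hsρ' : Measurable (subst ρ' : (ℤ → α) → ℤ → β) := measurable_subst ρ' hρ'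
    have hw : Measurable (word n : (ℤ → β) → Fin n → β) := measurable_word n
    set F : (ℤ → α) → (Fin n → β) × (Fin n → β) :=
      fun x => (word n (subst ρ x), word n (subst ρ' x)) with hFdef
    have hFm : Measurable F := (hw.comp hsρ).prodMk (hw.comp hsρ')
    have hint : Measurable fun qq : (Fin n → β) × (Fin n → β) => editDist n qq.1 qq.2 :=
      measurable_of_countable _
    set S : Set ℝ := {r : ℝ | ∃ m : Measure ((Fin n → β) × (Fin n → β)),
      IsProbabilityMeasure m ∧
      m.map Prod.fst = (kappa ρ ν).map (word n) ∧
      m.map Prod.snd = (kappa ρ' ν).map (word n) ∧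
      r = ∫ qq, editDist n qq.1 qq.2 ∂m} with hS
    have hmem : (∫ qq, editDist n qq.1 qq.2 ∂(ν.map F)) ∈ S := by
      refine ⟨ν.map F, Measure.isProbabilityMeasure_map hFm.aemeasurable, ?_, ?_, rfl⟩
      · rw [Measure.map_map measurable_fst hFm, kappa, Measure.map_map hw hsρ]
        rfl
      · rw [Measure.map_map measurable_snd hFm, kappa, Measure.map_map hw hsρ']
        rfl
    have hbdd : BddBelow S := by
      refine ⟨0, ?_⟩
      rintro r ⟨m, hm, _, _, rfl⟩
      exact integral_nonneg fun qq => editDist_nonneg n _ _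
    have hval : (∫ qq, editDist n qq.1 qq.2 ∂(ν.map F)) ≤ ε := by
      rw [integral_map hFm.aemeasurable hint.aestronglyMeasurable]
      have hb1 : ∀ x, ‖editDist n (word n (subst ρ x)) (word n (subst ρ' x))‖ ≤ ε := by
        intro x
        rw [Real.norm_eq_abs, abs_le]
        constructor
        · linarith [editDist_nonneg n (word n (subst ρ x)) (word n (subst ρ' x))]
        · exact hpoint n hn hn1 x
      have hni := norm_integral_le_of_norm_le_const (μ := ν) (ae_of_all _ hb1)
      rw [probReal_univ] at hni
      simp only [ENNReal.toReal_one, mul_one] at hni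
      exact le_trans (le_abs_self _) (by simpa [Real.norm_eq_abs] using hni)
    have : fbarN n (kappa ρ ν) (kappa ρ' ν) = sInf S := rfl
    rw [this]
    exact le_trans (csInf_le hbdd hmem) hval
  -- conclude
  have hfreq : ∃ᶠ n in atTop, fbarN n (kappa ρ ν) (kappa ρ' ν) ≤ ε := by
    apply Filter.Eventually.frequently
    filter_upwards [Filter.eventually_ge_atTop (max N₀ 1)] with n hn
    exact hbarN n (le_trans (le_max_left _ _) hn) (le_trans (le_max_right _ _) hn)
  have hbdd2 : BddBelow {ε' : ℝ | 0 < ε' ∧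
      ∃ᶠ n in atTop, fbarN n (kappa ρ ν) (kappa ρ' ν) ≤ ε'} :=
    ⟨0, fun y hy => hy.1.le⟩
  have hle : fbar (kappa ρ ν) (kappa ρ' ν) ≤ ε := csInf_le hbdd2 ⟨hε_pos, hfreq⟩
  linarith

end LBPaper
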